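/- The function δ ↦ φ(δ) = (1/2)(1+δ/2)(1 + √(1 + 4/(1+δ/2))) is strictly concave on (-1, ∞). -/

import Mathlib

noncomputable def phi (δ : ℝ) : ℝ :=
  (1/2) * (1 + δ/2) * (1 + Real.sqrt (1 + 4 / (1 + δ/2)))

noncomputable def gphi (x : ℝ) : ℝ :=
  (1/2) * ((1 + x/2) + Real.sqrt ((1 + x/2)^2 + 4*(1 + x/2)))

noncomputable def Gphi (x : ℝ) : ℝ :=
  1/4 + (3 + x/2) / (4 * Real.sqrt ((1 + x/2)^2 + 4*(1 + x/2)))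

lemma qpos {x : ℝ} (hx : -1 < x) : 0 < (1 + x/2)^2 + 4*(1 + x/2) := by nlinarith

lemma hasDerivAt_q (x : ℝ) :
    HasDerivAt (fun y : ℝ => (1 + y/2)^2 + 4*(1 + y/2)) (3 + x/2) x := by
  have h1 : HasDerivAt (fun y : ℝ => 1 + y/2) (1/2) x := by
    simpa using ((hasDerivAt_id x).div_const 2).const_add 1
  have h : HasDerivAt (fun y : ℝ => (1 + y/2)^2 + 4*(1 + y/2)) _ x := (h1.pow 2).add (h1.const_mul 4)
  convert h using 1
  ring

lemma hasDerivAt_sqrtq {x : ℝ} (hx : -1 < x) :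
    HasDerivAt (fun y : ℝ => Real.sqrt ((1 + y/2)^2 + 4*(1 + y/2)))
      ((3 + x/2) / (2 * Real.sqrt ((1 + x/2)^2 + 4*(1 + x/2)))) x :=
  (hasDerivAt_q x).sqrt (ne_of_gt (qpos hx))

lemma hasDerivAt_gphi {x : ℝ} (hx : -1 < x) : HasDerivAt gphi (Gphi x) x := by
  have hs0 : 0 < Real.sqrt ((1 + x/2)^2 + 4*(1 + x/2)) := Real.sqrt_pos.mpr (qpos hx)
  have h1 : HasDerivAt (fun y : ℝ => 1 + y/2) (1/2) x := by
    simpa using ((hasDerivAt_id x).div_const 2).const_add 1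
  have h : HasDerivAt gphi _ x := (h1.add (hasDerivAt_sqrtq hx)).const_mul (1/2)
  convert h using 1
  unfold Gphi
  field_simp
  ring

lemma deriv2_neg {x : ℝ} (hx : -1 < x) : deriv (deriv gphi) x < 0 := by
  have hq := qpos hx
  set s := Real.sqrt ((1 + x/2)^2 + 4*(1 + x/2)) with hsdef
  have hs0 : 0 < s := Real.sqrt_pos.mpr hq
  have hsq : s^2 = (1 + x/2)^2 + 4*(1 + x/2) := Real.sq_sqrt hq.le
  -- deriv gphi agrees with Gphi near x
  have hloc : deriv gphi =ᶠ[nhds x] Gphi := by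
    filter_upwards [Ioi_mem_nhds hx] with y hy
    exact (hasDerivAt_gphi hy).deriv
  rw [hloc.deriv_eq]
  -- compute deriv of Gphi at x
  have hnum : HasDerivAt (fun y : ℝ => 3 + y/2) (1/2) x := by
    simpa using ((hasDerivAt_id x).div_const 2).const_add 3
  have hden : HasDerivAt (fun y : ℝ => 4 * Real.sqrt ((1 + y/2)^2 + 4*(1 + y/2)))
      (4 * ((3 + x/2) / (2 * s))) x := (hasDerivAt_sqrtq hx).const_mul 4
  have hdne : (4 : ℝ) * s ≠ 0 := by positivity
  have hdiv := hnum.div hden hdne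
  have hG : HasDerivAt Gphi
      ((1/2 * (4 * s) - (3 + x/2) * (4 * ((3 + x/2) / (2 * s)))) / (4 * s)^2) x := by
    have := hdiv.const_add (1/4 : ℝ)
    exact this
  rw [hG.deriv]
  have hnumeq : 1/2 * (4 * s) - (3 + x/2) * (4 * ((3 + x/2) / (2 * s)))
      = (2 * s^2 - 2 * (3 + x/2)^2) / s := by
    field_simp
    ring
  rw [hnumeq]
  have hval : 2 * s^2 - 2 * (3 + x/2)^2 = -8 := by rw [hsq]; ring
  rw [hval]
  apply div_neg_of_neg_of_pos
  · apply div_neg_of_neg_of_pos <;> [norm_num; exact hs0]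
  · positivity

lemma gphi_strictConcaveOn : StrictConcaveOn ℝ (Set.Ioi (-1 : ℝ)) gphi := by
  apply strictConcaveOn_of_deriv2_neg (convex_Ioi _)
  · apply Continuous.continuousOn
    unfold gphi
    fun_prop
  · intro x hx
    rw [interior_Ioi] at hx
    simpa [Function.iterate_succ, Function.iterate_zero, Function.comp] using deriv2_neg hx

lemma phi_eq_gphi : Set.EqOn phi gphi (Set.Ioi (-1 : ℝ)) := by
  intro x hx
  have hu : (0 : ℝ) < 1 + x/2 := by simp only [Set.mem_Ioi] at hx; linarith
  have h2 : (2 : ℝ) + x ≠ 0 := by linarith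
  have h : Real.sqrt ((1 + x/2)^2 + 4*(1 + x/2)) = (1 + x/2) * Real.sqrt (1 + 4 / (1 + x/2)) := by
    rw [show (1 + x/2)^2 + 4*(1 + x/2) = (1 + x/2)^2 * (1 + 4 / (1 + x/2)) by
      field_simp [h2]]
    rw [Real.sqrt_mul (sq_nonneg _), Real.sqrt_sq hu.le]
  unfold phi gphi
  rw [h]
  ring

theorem phi_strictConcaveOn : StrictConcaveOn ℝ (Set.Ioi (-1 : ℝ)) phi := by
  have hg := gphi_strictConcaveOn
  refine ⟨hg.1, fun x hx y hy hxy a b ha hb hab => ?_⟩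
  rw [phi_eq_gphi hx, phi_eq_gphi hy, phi_eq_gphi (hg.1 hx hy ha.le hb.le hab)]
  exact hg.2 hx hy hxy ha hb hab
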